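/- Let Γ₁ and Γ be open cones in ℝ^d with the closure of Γ₁ contained in Γ ∪ {0}, and let m > 0 be smaller than the distance between the boundary ∂Γ and the intersection of Γ₁ with the unit sphere (assume this distance is positive). Then for all ξ ∈ Γ₁ and y ∉ Γ one has |ξ − y| ≥ m · max(|ξ|, |y|). -/

import Mathlib

open Topology Filter

/-- If `Γ₁, Γ` are open cones with `closure Γ₁ ⊆ Γ ∪ {0}` and `0 < m` is smaller
than the distance between `∂Γ` and `Γ₁ ∩ S^{d-1}` (assumed positive), then
`ξ ∈ Γ₁` and `y ∉ Γ` imply `|ξ − y| ≥ m · max(|ξ|, |y|)`. -/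
theorem cone_separation_estimate {d : ℕ}
    (Γ Γ₁ : Set (EuclideanSpace ℝ (Fin d)))
    (hΓopen : IsOpen Γ) (hΓ₁open : IsOpen Γ₁)
    (hΓcone : ∀ (t : ℝ), 0 < t → ∀ x ∈ Γ, t • x ∈ Γ)
    (hΓ₁cone : ∀ (t : ℝ), 0 < t → ∀ x ∈ Γ₁, t • x ∈ Γ₁)
    (hcl : closure Γ₁ ⊆ Γ ∪ {0})
    (m : ℝ) (hm : 0 < m)
    (hdist : ∀ x ∈ frontier Γ, ∀ u ∈ Γ₁, ‖u‖ = 1 → m < dist x u) :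
    ∀ ξ ∈ Γ₁, ∀ y, y ∉ Γ → m * max ‖ξ‖ ‖y‖ ≤ ‖ξ - y‖ := by
  -- frontier of Γ is closed under positive scaling
  have hfr : ∀ (t : ℝ), 0 < t → ∀ x ∈ frontier Γ, t • x ∈ frontier Γ := by
    intro t ht x hx
    rw [hΓopen.frontier_eq] at hx ⊢
    refine ⟨map_mem_closure (continuous_const_smul t) hx.1
      (fun z hz => hΓcone t ht z hz), fun h => hx.2 ?_⟩
    have := hΓcone t⁻¹ (by positivity) _ h
    rwa [smul_smul, inv_mul_cancel₀ ht.ne', one_smul] at this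
  -- the segment from a point of Γ to a point outside Γ meets the frontier
  have hseg : ∀ v ∈ Γ, ∀ y, y ∉ Γ → ∃ x ∈ frontier Γ, dist v x ≤ dist v y := by
    intro v hv y hy
    set p : ℝ → EuclideanSpace ℝ (Fin d) := fun s => v + s • (y - v) with hp
    have hpc : Continuous p := continuous_const.add (continuous_id.smul continuous_const)
    set T : Set ℝ := Set.Icc 0 1 ∩ p ⁻¹' Γᶜ with hT
    have hTc : IsClosed T := isClosed_Icc.inter (hΓopen.isClosed_compl.preimage hpc)
    have h1T : (1 : ℝ) ∈ T := by
      refine ⟨by norm_num, ?_⟩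
      simp only [Set.mem_preimage, Set.mem_compl_iff, hp, one_smul]
      simpa using hy
    have hbdd : BddBelow T := ⟨0, fun s hs => hs.1.1⟩
    set s₀ := sInf T with hs₀
    have hs₀T : s₀ ∈ T := hTc.csInf_mem ⟨1, h1T⟩ hbdd
    have hs₀pos : 0 < s₀ := by
      rcases lt_or_eq_of_le hs₀T.1.1 with h | h
      · exact h
      · exfalso
        apply hs₀T.2
        simp only [Set.mem_preimage, hp, ← h, zero_smul, add_zero]
        exact hv
    refine ⟨p s₀, ?_, ?_⟩
    · rw [hΓopen.frontier_eq]
      refine ⟨?_, hs₀T.2⟩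
      have hev : ∀ᶠ s in 𝓝[<] s₀, p s ∈ Γ := by
        filter_upwards [self_mem_nhdsWithin,
          ((eventually_gt_nhds hs₀pos).filter_mono nhdsWithin_le_nhds)] with s hs hspos
        by_contra hsΓ
        have hsT : s ∈ T := ⟨⟨le_of_lt hspos, le_trans (le_of_lt hs) hs₀T.1.2⟩, hsΓ⟩
        exact absurd (csInf_le hbdd hsT) (not_le.mpr hs)
      exact mem_closure_of_tendsto ((hpc.tendsto s₀).mono_left nhdsWithin_le_nhds) hev
    · have : dist v (p s₀) = s₀ * ‖y - v‖ := by
        simp only [hp, dist_eq_norm]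
        rw [show v - (v + s₀ • (y - v)) = (-s₀) • (y - v) by module]
        rw [norm_smul, Real.norm_eq_abs, abs_neg, abs_of_pos hs₀pos]
      rw [this, dist_eq_norm, ← norm_sub_rev]
      nlinarith [mul_nonneg (sub_nonneg.mpr hs₀T.1.2) (norm_nonneg (v - y))]
  -- key estimate: for nonzero v ∈ Γ₁ and y ∉ Γ, m‖v‖ ≤ ‖v - y‖
  have hkey : ∀ v ∈ Γ₁, v ≠ 0 → ∀ y, y ∉ Γ → m * ‖v‖ ≤ ‖v - y‖ := by
    intro v hv hv0 y hy
    have hvΓ : v ∈ Γ := by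
      rcases hcl (subset_closure hv) with h | h
      · exact h
      · exact absurd h hv0
    obtain ⟨x, hx, hxd⟩ := hseg v hvΓ y hy
    have hr : (0:ℝ) < ‖v‖ := norm_pos_iff.mpr hv0
    have hu : (‖v‖⁻¹ • v) ∈ Γ₁ := hΓ₁cone _ (by positivity) v hv
    have hun : ‖(‖v‖⁻¹ • v)‖ = 1 := by
      rw [norm_smul, Real.norm_eq_abs, abs_of_pos (by positivity)]
      field_simp
    have hx' : (‖v‖⁻¹ • x) ∈ frontier Γ := hfr _ (by positivity) x hx
    have := hdist _ hx' _ hu hun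
    rw [dist_smul₀, Real.norm_eq_abs, abs_of_pos (by positivity)] at this
    have hmv : m * ‖v‖ < dist x v := by
      calc m * ‖v‖ = ‖v‖ * m := mul_comm _ _
        _ < ‖v‖ * (‖v‖⁻¹ * dist x v) := (mul_lt_mul_iff_right₀ hr).mpr this
        _ = dist x v := by field_simp
    rw [dist_comm] at hmv
    rw [← dist_eq_norm]
    exact le_trans hmv.le hxd
  intro ξ hξ y hy
  rcases eq_or_ne ξ 0 with hξ0 | hξ0
  · -- ξ = 0 forces y = 0
    have hy0 : y = 0 := by
      by_contra hy0
      apply hy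
      have h0 : (0 : EuclideanSpace ℝ (Fin d)) ∈ Γ₁ := hξ0 ▸ hξ
      obtain ⟨ε, hε, hball⟩ := Metric.isOpen_iff.mp hΓ₁open 0 h0
      have hyn : (0:ℝ) < ‖y‖ := norm_pos_iff.mpr hy0
      have hz : (ε / (2 * ‖y‖)) • y ∈ Γ₁ := by
        apply hball
        simp only [Metric.mem_ball, dist_zero_right, norm_smul, Real.norm_eq_abs,
          abs_of_pos (show (0:ℝ) < ε / (2 * ‖y‖) by positivity)]
        rw [div_mul_eq_mul_div, mul_comm]
        rw [div_lt_iff₀ (by positivity)]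
        nlinarith
      have : y ∈ Γ₁ := by
        have := hΓ₁cone ((2 * ‖y‖) / ε) (by positivity) _ hz
        rwa [smul_smul, div_mul_div_comm, mul_comm (2 * ‖y‖) ε,
          div_self (by positivity), one_smul] at this
      rcases hcl (subset_closure this) with h | h
      · exact h
      · exact absurd h hy0
    subst hξ0 hy0
    simp
  · -- ξ ≠ 0
    have hξn : (0:ℝ) < ‖ξ‖ := norm_pos_iff.mpr hξ0
    have hξΓ : ξ ∈ Γ := by
      rcases hcl (subset_closure hξ) with h | h
      · exact h
      · exact absurd h hξ0
    -- m < 1 because 0 ∈ frontier Γ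
    have hm1 : m < 1 := by
      have h0cl : (0 : EuclideanSpace ℝ (Fin d)) ∈ closure Γ := by
        rw [Metric.mem_closure_iff]
        intro ε hε
        refine ⟨(ε / (2 * ‖ξ‖)) • ξ, hΓcone _ (by positivity) _ hξΓ, ?_⟩
        simp only [dist_zero_left, norm_smul, Real.norm_eq_abs,
          abs_of_pos (show (0:ℝ) < ε / (2 * ‖ξ‖) by positivity)]
        rw [div_mul_eq_mul_div, mul_comm, div_lt_iff₀ (by positivity)]
        nlinarith
      have h0Γ : (0 : EuclideanSpace ℝ (Fin d)) ∉ Γ := by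
        intro h0
        apply hy
        obtain ⟨ε, hε, hball⟩ := Metric.isOpen_iff.mp hΓopen 0 h0
        rcases eq_or_ne y 0 with rfl | hy0
        · exact h0
        have hyn : (0:ℝ) < ‖y‖ := norm_pos_iff.mpr hy0
        have hz : (ε / (2 * ‖y‖)) • y ∈ Γ := by
          apply hball
          simp only [Metric.mem_ball, dist_zero_right, norm_smul, Real.norm_eq_abs,
            abs_of_pos (show (0:ℝ) < ε / (2 * ‖y‖) by positivity)]
          rw [div_mul_eq_mul_div, mul_comm, div_lt_iff₀ (by positivity)]
          nlinarith
        have := hΓcone ((2 * ‖y‖) / ε) (by positivity) _ hz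
        rwa [smul_smul, div_mul_div_comm, mul_comm (2 * ‖y‖) ε,
          div_self (by positivity), one_smul] at this
      have h0fr : (0 : EuclideanSpace ℝ (Fin d)) ∈ frontier Γ := by
        rw [hΓopen.frontier_eq]; exact ⟨h0cl, h0Γ⟩
      have hu : (‖ξ‖⁻¹ • ξ) ∈ Γ₁ := hΓ₁cone _ (by positivity) ξ hξ
      have hun : ‖(‖ξ‖⁻¹ • ξ)‖ = 1 := by
        rw [norm_smul, Real.norm_eq_abs, abs_of_pos (by positivity)]
        field_simp
      have := hdist _ h0fr _ hu hun
      rwa [dist_zero_left, hun] at this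
    have bound1 : m * ‖ξ‖ ≤ ‖ξ - y‖ := hkey ξ hξ hξ0 y hy
    have bound2 : m * ‖y‖ ≤ ‖ξ - y‖ := by
      rcases eq_or_ne y 0 with rfl | hy0
      · simp only [norm_zero, mul_zero]; exact norm_nonneg _
      set u := ‖ξ‖⁻¹ • ξ with hu_def
      have hu : u ∈ Γ₁ := hΓ₁cone _ (by positivity) ξ hξ
      have hun : ‖u‖ = 1 := by
        rw [hu_def, norm_smul, Real.norm_eq_abs, abs_of_pos (by positivity)]
        field_simp
      set r := ‖y‖ with hr_def
      have hrpos : (0:ℝ) < r := norm_pos_iff.mpr hy0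
      set c : ℝ := inner ℝ u y with hc_def
      -- for every t' > 0, m t' ≤ ‖t' • u - y‖, hence (mt')² ≤ t'² - 2t'c + r²
      have hall : ∀ t' : ℝ, 0 < t' → m^2 * t'^2 ≤ t'^2 - 2 * t' * c + r^2 := by
        intro t' ht'
        have htu : t' • u ∈ Γ₁ := hΓ₁cone t' ht' u hu
        have htu0 : t' • u ≠ 0 := by
          intro h
          have : ‖t' • u‖ = 0 := by rw [h, norm_zero]
          rw [norm_smul, Real.norm_eq_abs, abs_of_pos ht', hun, mul_one] at this
          exact ht'.ne' this
        have := hkey _ htu htu0 y hy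
        rw [norm_smul, Real.norm_eq_abs, abs_of_pos ht', hun, mul_one] at this
        have hsq := norm_sub_sq_real (t' • u) y
        rw [norm_smul, Real.norm_eq_abs, abs_of_pos ht', hun, mul_one,
          real_inner_smul_left, ← hc_def, ← hr_def] at hsq
        nlinarith [norm_nonneg (t' • u - y), mul_pos hm ht']
      -- deduce c ≤ r √(1-m²)
      set s := Real.sqrt (1 - m^2) with hs_def
      have hs2 : s^2 = 1 - m^2 := Real.sq_sqrt (by nlinarith)
      have hspos : 0 < s := Real.sqrt_pos.mpr (by nlinarith)
      have ht₀ : 0 < r / s := div_pos hrpos hspos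
      have h1 : (r/s)^2 * (1 - m^2) = r^2 := by
        rw [← hs2, ← mul_pow, div_mul_cancel₀ r hspos.ne']
      have h3 : (r/s) * c ≤ r^2 := by nlinarith [hall (r/s) ht₀, h1]
      have h5 : (r/s) * (r*s) = r^2 := by field_simp
      have hc_le : c ≤ r * s := (mul_le_mul_iff_right₀ ht₀).mp (h5.symm ▸ h3)
      -- conclude
      have hξy : ‖ξ - y‖^2 = ‖ξ‖^2 - 2 * (‖ξ‖ * c) + r^2 := by
        have hsq := norm_sub_sq_real ξ y
        have : (inner ℝ ξ y : ℝ) = ‖ξ‖ * c := by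
          rw [hc_def, hu_def, real_inner_smul_left]
          field_simp
        rw [this, ← hr_def] at hsq
        exact hsq
      have hfin : (m * r)^2 ≤ ‖ξ - y‖^2 := by
        rw [hξy]
        nlinarith [sq_nonneg (‖ξ‖ - r * s), sq_nonneg (r * m), hξn, hrpos,
          mul_le_mul_of_nonneg_left hc_le hξn.le]
      have := Real.sqrt_le_sqrt hfin
      rwa [Real.sqrt_sq (by positivity), Real.sqrt_sq (norm_nonneg _)] at this
    rw [mul_max_of_nonneg _ _ hm.le]
    exact max_le bound1 bound2
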